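/- Let (X,d) be a metric space, x,y ∈ X, and A ⊆ X a closed path-separating set between x and y. For every rectifiable curve γ from x to y, the function τ ↦ pos_A((γ ∩ A)_τ) is 1-Lipschitz on [0, ℓ(γ ∩ A)]: |pos_A((γ ∩ A)_{τ1}) − pos_A((γ ∩ A)_{τ2})| ≤ |τ1 − τ2|. -/

import Mathlib

open MeasureTheory Metric Set Filter
open scoped ENNReal NNReal

noncomputable section

/-- A rectifiable curve from `x` to `y`, encoded via a `1`-Lipschitz
(arclength-type) parametrization on `[0, T]`. -/
structure RectCurve (X : Type*) [MetricSpace X] (x y : X) where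
  T : ℝ
  T_nonneg : 0 ≤ T
  toFun : ℝ → X
  lip : LipschitzOnWith 1 toFun (Set.Icc 0 T)
  source : toFun 0 = x
  target : toFun T = y

/-- Length spent by the curve inside `A` up to time `s`. -/
def RectCurve.lengthInUpTo {X : Type*} [MetricSpace X] {x y : X}
    (c : RectCurve X x y) (A : Set X) (s : ℝ) : ℝ≥0∞ :=
  volume {t : ℝ | t ∈ Set.Icc 0 (min s c.T) ∧ c.toFun t ∈ A}

/-- Total length spent by the curve inside `A`. -/
def RectCurve.lengthIn {X : Type*} [MetricSpace X] {x y : X}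
    (c : RectCurve X x y) (A : Set X) : ℝ≥0∞ :=
  c.lengthInUpTo A c.T

/-- Length of the curve. -/
def RectCurve.length {X : Type*} [MetricSpace X] {x y : X}
    (c : RectCurve X x y) : ℝ≥0∞ :=
  eVariationOn c.toFun (Set.Icc 0 c.T)

/-- The width of `A` with respect to `x, y`: infimum over rectifiable curves
from `x` to `y` of the length spent inside `A` (`∞` if there is no such curve). -/
def width {X : Type*} [MetricSpace X] (x y : X) (A : Set X) : ℝ≥0∞ :=
  ⨅ c : RectCurve X x y, c.lengthIn A

/-- The position function of the set `A` with respect to `x, y`. -/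
def posFn {X : Type*} [MetricSpace X] (x y : X) (A : Set X) (z : X) : ℝ≥0∞ :=
  ⨅ (c : RectCurve X x y) (s : ℝ) (_ : s ∈ Set.Icc 0 c.T) (_ : c.toFun s = z),
    c.lengthInUpTo A s

/-- Topological separating set from `x` to `y`. -/
def IsSepSet {X : Type*} [MetricSpace X] (x y : X) (Ω : Set X) : Prop :=
  IsClosed Ω ∧ ∃ r > 0, Metric.ball x r ⊆ interior Ω ∧ Metric.ball y r ⊆ Ωᶜ

/-- Path-separating set between `x` and `y`: every rectifiable curve from `x`
to `y` meets `A`. -/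
def IsPathSep {X : Type*} [MetricSpace X] (x y : X) (A : Set X) : Prop :=
  ∀ c : RectCurve X x y, ∃ t ∈ Set.Icc 0 c.T, c.toFun t ∈ A

/-- Minkowski content of `Ω` with respect to `μ`. -/
def mink {X : Type*} [MetricSpace X] [MeasurableSpace X] (μ : Measure X) (Ω : Set X) : ℝ≥0∞ :=
  Filter.liminf (fun r : ℝ => μ (Metric.cthickening r Ω \ Ω) / ENNReal.ofReal r)
    (nhdsWithin 0 (Set.Ioi 0))

/-- The Riesz density with poles at `x` and `y` (it vanishes at the poles). -/
def rieszDensity {X : Type*} [MetricSpace X] [MeasurableSpace X] (m : Measure X) (x y : X) (z : X) : ℝ≥0∞ :=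
  ENNReal.ofReal (dist x z) / m (Metric.ball x (dist x z))
    + ENNReal.ofReal (dist y z) / m (Metric.ball y (dist y z))

/-- The `L`-truncated Riesz measure `m_{x,y}^L`. -/
def rieszMeasure {X : Type*} [MetricSpace X] [MeasurableSpace X] (m : Measure X) (x y : X) (L : ℝ) :
    Measure X :=
  m.withDensity
    ((Metric.ball x (2 * L * dist x y) ∪ Metric.ball y (2 * L * dist x y)).indicator
      (rieszDensity m x y))

/-- The local Lipschitz constant `lip u (z)` (with value `0` at isolated points,
since the limsup along the empty filter is `⊥`). -/
def lipConst {X : Type*} [MetricSpace X] (u : X → ℝ) (z : X) : ℝ≥0∞ :=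
  Filter.limsup (fun w => ENNReal.ofReal (|u w - u z| / dist w z))
    (nhdsWithin z {z}ᶜ)

/-- `m` is `C`-doubling. -/
def IsDoubling {X : Type*} [MetricSpace X] [MeasurableSpace X] (m : Measure X) (C : ℝ≥0) : Prop :=
  ∀ (z : X) (r : ℝ), 0 < r → m (Metric.ball z (2 * r)) ≤ C * m (Metric.ball z r)

/-- The separating ratio `m(A)/width_{x,y}(A)`, with the conventions that it is
`∞` when the width vanishes and `0` when the width is infinite. -/
def sepRatio {X : Type*} [MetricSpace X] [MeasurableSpace X] (m : Measure X) (x y : X) (A : Set X) : ℝ≥0∞ :=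
  if width x y A = 0 then ⊤ else m A / width x y A

/-- The support of the measure `m`. -/
def msupport {X : Type*} [MetricSpace X] [MeasurableSpace X] (m : Measure X) : Set X :=
  {z | ∀ r > 0, 0 < m (Metric.ball z r)}

/-- Line integral of a nonnegative density along a rectifiable curve
(in its `1`-Lipschitz parametrization). -/
def lineIntegral {X : Type*} [MetricSpace X] {x y : X}
    (c : RectCurve X x y) (ρ : X → ℝ≥0∞) : ℝ≥0∞ :=
  ∫⁻ t in Set.Icc (0 : ℝ) c.T, ρ (c.toFun t)

/-- Admissible densities for a family of curves. -/
def Adm {X : Type*} [MetricSpace X] [MeasurableSpace X] {x y : X} (Γ : Set (RectCurve X x y)) :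
    Set (X → ℝ≥0∞) :=
  {ρ | Measurable ρ ∧ ∀ c ∈ Γ, 1 ≤ lineIntegral c ρ}

/-- The `p`-modulus of a family of curves with respect to the measure `ν`. -/
def Modulus {X : Type*} [MetricSpace X] [MeasurableSpace X] {x y : X} (p : ℝ)
    (Γ : Set (RectCurve X x y)) (ν : Measure X) : ℝ≥0∞ :=
  ⨅ ρ ∈ Adm Γ, ∫⁻ z, ρ z ^ p ∂ν

end

section AuxLemmas

open MeasureTheory Metric Set Filter
open scoped ENNReal NNReal

variable {X : Type*} [MetricSpace X] {x y : X}

private lemma edist_real_add {u b v : ℝ} (h1 : u ≤ b) (h2 : b ≤ v) :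
    edist u b + edist b v = edist u v := by
  rw [edist_dist, edist_dist, edist_dist, Real.dist_eq, Real.dist_eq, Real.dist_eq,
    abs_sub_comm u b, abs_sub_comm b v, abs_sub_comm u v,
    abs_of_nonneg (by linarith : (0:ℝ) ≤ b - u), abs_of_nonneg (by linarith : (0:ℝ) ≤ v - b),
    abs_of_nonneg (by linarith : (0:ℝ) ≤ v - u),
    ← ENNReal.ofReal_add (by linarith) (by linarith)]
  ring_nf

private lemma lip_glue {f g : ℝ → X} {a b d : ℝ} (hab : a ≤ b) (hbd : b ≤ d)
    (hf : LipschitzOnWith 1 f (Icc a b)) (hg : LipschitzOnWith 1 g (Icc b d))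
    (hfb : f b = g b) :
    LipschitzOnWith 1 (fun t => if t ≤ b then f t else g t) (Icc a d) := by
  have key : ∀ u ∈ Icc a d, ∀ v ∈ Icc a d, u ≤ v →
      edist (if u ≤ b then f u else g u) (if v ≤ b then f v else g v) ≤ edist u v := by
    intro u hu v hv huv
    by_cases hvb : v ≤ b
    · rw [if_pos (huv.trans hvb), if_pos hvb]
      simpa using hf ⟨hu.1, huv.trans hvb⟩ ⟨hv.1, hvb⟩
    · by_cases hub : u ≤ b
      · rw [if_pos hub, if_neg hvb]
        calc edist (f u) (g v) ≤ edist (f u) (f b) + edist (g b) (g v) := by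
              rw [hfb]; exact edist_triangle _ _ _
          _ ≤ edist u b + edist b v :=
              add_le_add (by simpa using hf ⟨hu.1, hub⟩ ⟨hab, le_refl b⟩)
                (by simpa using hg ⟨le_refl b, hbd⟩ ⟨le_of_not_ge hvb, hv.2⟩)
          _ = edist u v := edist_real_add hub (le_of_not_ge hvb)
      · rw [if_neg hub, if_neg hvb]
        simpa using hg ⟨le_of_not_ge hub, hu.2⟩ ⟨(le_of_not_ge hub).trans huv, hv.2⟩
  intro u hu v hv
  rcases le_total u v with h | h
  · simpa using key u hu v hv h
  · rw [edist_comm, edist_comm u v]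
    simpa using key v hv u hu h

private lemma timeSet_closed (c : RectCurve X x y) {A : Set X} (hA : IsClosed A) :
    IsClosed {t : ℝ | t ∈ Icc 0 c.T ∧ c.toFun t ∈ A} :=
  c.lip.continuousOn.preimage_isClosed_of_isClosed isClosed_Icc hA

private lemma lengthInUpTo_mono (c : RectCurve X x y) (A : Set X) {s s' : ℝ} (h : s ≤ s') :
    c.lengthInUpTo A s ≤ c.lengthInUpTo A s' :=
  measure_mono fun t ht =>
    ⟨⟨ht.1.1, ht.1.2.trans (min_le_min h le_rfl)⟩, ht.2⟩

private lemma lengthInUpTo_lip (c : RectCurve X x y) (A : Set X) {s s' : ℝ} (h : s ≤ s') :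
    c.lengthInUpTo A s' ≤ c.lengthInUpTo A s + ENNReal.ofReal (s' - s) := by
  have hsub : {t : ℝ | t ∈ Icc 0 (min s' c.T) ∧ c.toFun t ∈ A} ⊆
      {t : ℝ | t ∈ Icc 0 (min s c.T) ∧ c.toFun t ∈ A} ∪ Ioc (min s c.T) (min s' c.T) := by
    rintro t ⟨⟨h0, h1⟩, hmem⟩
    rcases le_or_gt t (min s c.T) with h' | h'
    · exact Or.inl ⟨⟨h0, h'⟩, hmem⟩
    · exact Or.inr ⟨h', h1⟩
  calc c.lengthInUpTo A s' ≤ _ := (measure_mono hsub).trans (measure_union_le _ _)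
    _ ≤ c.lengthInUpTo A s + ENNReal.ofReal (s' - s) := by
        refine add_le_add (le_of_eq rfl) ?_
        rw [Real.volume_Ioc]
        refine ENNReal.ofReal_le_ofReal ?_
        rcases min_cases s c.T with ⟨h1, h2⟩ | ⟨h1, h2⟩ <;>
          rcases min_cases s' c.T with ⟨h3, h4⟩ | ⟨h3, h4⟩ <;> linarith

private lemma lengthInUpTo_ne_top (c : RectCurve X x y) (A : Set X) (s : ℝ) :
    c.lengthInUpTo A s ≠ ⊤ := by
  refine ne_top_of_le_ne_top ?_ (measure_mono (fun t ht => ht.1) :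
    c.lengthInUpTo A s ≤ volume (Icc 0 (min s c.T)))
  simp [Real.volume_Icc]

private lemma lengthInUpTo_split (c : RectCurve X x y) {A : Set X} (hA : IsClosed A)
    {a b : ℝ} (h0 : 0 ≤ a) (hab : a ≤ b) (hbT : b ≤ c.T) :
    c.lengthInUpTo A b =
      c.lengthInUpTo A a + volume {t : ℝ | t ∈ Ioc a b ∧ c.toFun t ∈ A} := by
  have hmina : min a c.T = a := min_eq_left (hab.trans hbT)
  have hminb : min b c.T = b := min_eq_left hbT
  have hmeas : MeasurableSet {t : ℝ | t ∈ Icc 0 a ∧ c.toFun t ∈ A} := by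
    have he : {t : ℝ | t ∈ Icc 0 a ∧ c.toFun t ∈ A}
        = Icc 0 a ∩ {t : ℝ | t ∈ Icc 0 c.T ∧ c.toFun t ∈ A} := by
      ext t
      constructor
      · rintro ⟨ht, hAt⟩; exact ⟨ht, ⟨ht.1, ht.2.trans (hab.trans hbT)⟩, hAt⟩
      · rintro ⟨ht, _, hAt⟩; exact ⟨ht, hAt⟩
    rw [he]
    exact measurableSet_Icc.inter (timeSet_closed c hA).measurableSet
  have hunion : {t : ℝ | t ∈ Icc 0 b ∧ c.toFun t ∈ A} =
      {t : ℝ | t ∈ Icc 0 a ∧ c.toFun t ∈ A} ∪ {t : ℝ | t ∈ Ioc a b ∧ c.toFun t ∈ A} := by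
    ext t
    constructor
    · rintro ⟨⟨h1, h2⟩, hAt⟩
      rcases le_or_gt t a with h | h
      · exact Or.inl ⟨⟨h1, h⟩, hAt⟩
      · exact Or.inr ⟨⟨h, h2⟩, hAt⟩
    · rintro (⟨⟨h1, h2⟩, hAt⟩ | ⟨⟨h1, h2⟩, hAt⟩)
      · exact ⟨⟨h1, h2.trans hab⟩, hAt⟩
      · exact ⟨⟨h0.trans h1.le, h2⟩, hAt⟩
  have hdisj : Disjoint {t : ℝ | t ∈ Icc 0 a ∧ c.toFun t ∈ A}
      {t : ℝ | t ∈ Ioc a b ∧ c.toFun t ∈ A} := by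
    rw [Set.disjoint_left]
    rintro t ⟨ht, _⟩ ⟨ht', _⟩
    exact absurd ht.2 (not_le.mpr ht'.1)
  rw [RectCurve.lengthInUpTo, RectCurve.lengthInUpTo, hmina, hminb, hunion,
    measure_union' hdisj hmeas]

private lemma sInf_mem_Icc (c : RectCurve X x y) (A : Set X) {τ : ℝ}
    (hτ : ENNReal.ofReal τ ≤ c.lengthIn A) :
    sInf {s : ℝ | s ∈ Icc 0 c.T ∧ ENNReal.ofReal τ ≤ c.lengthInUpTo A s} ∈ Icc 0 c.T := by
  have hne : c.T ∈ {s : ℝ | s ∈ Icc 0 c.T ∧ ENNReal.ofReal τ ≤ c.lengthInUpTo A s} :=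
    ⟨⟨c.T_nonneg, le_rfl⟩, hτ⟩
  exact ⟨le_csInf ⟨c.T, hne⟩ fun s hs => hs.1.1, csInf_le ⟨0, fun s hs => hs.1.1⟩ hne⟩

private lemma lengthInUpTo_sInf (c : RectCurve X x y) (A : Set X) {τ : ℝ}
    (h0 : 0 ≤ τ) (hτ : ENNReal.ofReal τ ≤ c.lengthIn A) :
    c.lengthInUpTo A (sInf {s : ℝ | s ∈ Icc 0 c.T ∧ ENNReal.ofReal τ ≤ c.lengthInUpTo A s})
      = ENNReal.ofReal τ := by
  set S := {s : ℝ | s ∈ Icc 0 c.T ∧ ENNReal.ofReal τ ≤ c.lengthInUpTo A s} with hS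
  set s0 := sInf S with hs0def
  have hS_ne : S.Nonempty := ⟨c.T, ⟨⟨c.T_nonneg, le_rfl⟩, hτ⟩⟩
  have hbdd : BddBelow S := ⟨0, fun s hs => hs.1.1⟩
  have hs0 : s0 ∈ Icc 0 c.T := sInf_mem_Icc c A hτ
  apply le_antisymm
  · refine ENNReal.le_of_forall_pos_le_add fun ε hε _ => ?_
    rcases eq_or_lt_of_le hs0.1 with h | h
    · have hz : c.lengthInUpTo A s0 = 0 := by
        refine le_antisymm ?_ zero_le
        have : {t : ℝ | t ∈ Icc 0 (min s0 c.T) ∧ c.toFun t ∈ A} ⊆ {(0:ℝ)} := by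
          rintro t ⟨⟨ht0, ht1⟩, _⟩
          have : min s0 c.T = 0 := by
            rw [← h]; exact min_eq_left c.T_nonneg
          simp only [mem_singleton_iff]
          rw [this] at ht1
          linarith
        exact (measure_mono this).trans_eq Real.volume_singleton
      rw [hz]
      exact zero_le
    · set δ := min (ε : ℝ) s0 with hδdef
      have hδ0 : 0 < δ := lt_min (by exact_mod_cast hε) h
      have hδs0 : δ ≤ s0 := min_le_right _ _
      have hsδ : s0 - δ ∉ S := fun hmem => absurd (csInf_le hbdd hmem) (by linarith)
      have hIcc : s0 - δ ∈ Icc 0 c.T := ⟨by linarith, by linarith [hs0.2]⟩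
      have hlt : c.lengthInUpTo A (s0 - δ) ≤ ENNReal.ofReal τ := by
        by_contra hc
        exact hsδ ⟨hIcc, (not_le.mp hc).le⟩
      calc c.lengthInUpTo A s0
          ≤ c.lengthInUpTo A (s0 - δ) + ENNReal.ofReal (s0 - (s0 - δ)) :=
            lengthInUpTo_lip c A (by linarith)
        _ ≤ ENNReal.ofReal τ + (ε : ℝ≥0∞) := by
            refine add_le_add hlt ?_
            rw [show s0 - (s0 - δ) = δ by ring]
            calc ENNReal.ofReal δ ≤ ENNReal.ofReal (ε : ℝ) :=
                ENNReal.ofReal_le_ofReal (min_le_left _ _)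
              _ = (ε : ℝ≥0∞) := ENNReal.ofReal_coe_nnreal
  · refine ENNReal.le_of_forall_pos_le_add fun ε hε _ => ?_
    obtain ⟨s, hsS, hss⟩ : ∃ s ∈ S, s < s0 + ε := by
      refine (csInf_lt_iff hbdd hS_ne).mp ?_
      rw [← hs0def]
      exact lt_add_of_pos_right _ (by exact_mod_cast hε)
    have hs0s : s0 ≤ s := csInf_le hbdd hsS
    calc ENNReal.ofReal τ ≤ c.lengthInUpTo A s := hsS.2
      _ ≤ c.lengthInUpTo A s0 + ENNReal.ofReal (s - s0) := lengthInUpTo_lip c A hs0s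
      _ ≤ c.lengthInUpTo A s0 + (ε : ℝ≥0∞) := by
          refine add_le_add_right ?_ _
          calc ENNReal.ofReal (s - s0) ≤ ENNReal.ofReal (ε : ℝ) :=
              ENNReal.ofReal_le_ofReal (by linarith)
            _ = (ε : ℝ≥0∞) := ENNReal.ofReal_coe_nnreal

private lemma volume_preimage_affine_unit {σ : ℝ} (hσ : σ = 1 ∨ σ = -1) (a : ℝ) (W : Set ℝ) :
    volume ((fun t => a + σ * t) ⁻¹' W) = volume W := by
  rcases hσ with rfl | rfl
  · have he : (fun t : ℝ => a + 1 * t) = fun t : ℝ => t + a := by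
      funext t; ring
    rw [he]
    exact measure_preimage_add_right volume a W
  · have he : (fun t : ℝ => a + (-1) * t) ⁻¹' W = Neg.neg ⁻¹' ((fun t : ℝ => t + a) ⁻¹' W) := by
      ext t
      have he2 : a + (-1) * t = -t + a := by ring
      simp only [mem_preimage, he2]
    rw [he, Measure.measure_preimage_neg, measure_preimage_add_right]

end AuxLemmas

section ConcatLemma

open MeasureTheory Metric Set Filter
open scoped ENNReal NNReal

variable {X : Type*} [MetricSpace X] {x y : X}

private lemma posFn_le_concat (A : Set X) (c : RectCurve X x y)
    {s₁ s₂ : ℝ} (hs₁ : s₁ ∈ Icc 0 c.T) (hs₂ : s₂ ∈ Icc 0 c.T)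
    (η : RectCurve X x y) {s : ℝ} (hs : s ∈ Icc 0 η.T) (hηs : η.toFun s = c.toFun s₂) :
    posFn x y A (c.toFun s₁) ≤ η.lengthInUpTo A s
      + volume {t : ℝ | t ∈ Icc (min s₁ s₂) (max s₁ s₂) ∧ c.toFun t ∈ A} := by
  classical
  set σ : ℝ := if s₂ ≤ s₁ then 1 else -1 with hσdef
  have hσ : σ = 1 ∨ σ = -1 := by
    rcases le_or_gt s₂ s₁ with h | h
    · exact Or.inl (if_pos h)
    · exact Or.inr (if_neg (not_le.mpr h))
  set D : ℝ := |s₁ - s₂| with hDdef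
  have hD0 : 0 ≤ D := abs_nonneg _
  have hσD : σ * D = s₁ - s₂ := by
    rcases le_or_gt s₂ s₁ with h | h
    · rw [hσdef, if_pos h, hDdef, abs_of_nonneg (by linarith)]; ring
    · rw [hσdef, if_neg (not_le.mpr h), hDdef, abs_of_neg (by linarith)]; ring
  have hu_mem : ∀ t ∈ Icc s (s + D), s₂ + σ * (t - s) ∈ Icc (min s₁ s₂) (max s₁ s₂) := by
    intro t ht
    obtain ⟨ht1, ht2⟩ := ht
    rcases le_or_gt s₂ s₁ with h | h
    · have hσ1 : σ = 1 := if_pos h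
      have hD : D = s₁ - s₂ := by rw [hDdef, abs_of_nonneg (by linarith)]
      rw [min_eq_right h, max_eq_left h, hσ1]
      constructor <;> [linarith; linarith]
    · have hσ1 : σ = -1 := if_neg (not_le.mpr h)
      have hD : D = s₂ - s₁ := by rw [hDdef, abs_of_neg (by linarith)]; ring
      rw [min_eq_left h.le, max_eq_right h.le, hσ1]
      constructor <;> [linarith; linarith]
  have hIccsub : Icc (min s₁ s₂) (max s₁ s₂) ⊆ Icc 0 c.T :=
    Icc_subset_Icc (le_min hs₁.1 hs₂.1) (max_le hs₁.2 hs₂.2)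
  set T' : ℝ := s + D + (c.T - s₁) with hT'def
  have hsT' : s + D ≤ T' := by rw [hT'def]; linarith [hs₁.2]
  have hsle : s ≤ s + D := by linarith
  set mid : ℝ → X := fun t => c.toFun (s₂ + σ * (t - s)) with hmiddef
  set tail : ℝ → X := fun t => c.toFun (t - (s + D) + s₁) with htaildef
  -- Lipschitz facts
  have hedist_aff : ∀ u v : ℝ, edist (s₂ + σ * (u - s)) (s₂ + σ * (v - s)) = edist u v := by
    intro u v
    rw [edist_dist, edist_dist, Real.dist_eq, Real.dist_eq]
    have : s₂ + σ * (u - s) - (s₂ + σ * (v - s)) = σ * (u - v) := by ring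
    rw [this, abs_mul]
    rcases hσ with h | h <;> simp [h]
  have hmid_lip : LipschitzOnWith 1 mid (Icc s (s + D)) := by
    intro u hu v hv
    have := c.lip (hIccsub (hu_mem u hu)) (hIccsub (hu_mem v hv))
    simpa [hmiddef, hedist_aff u v] using this
  have htail_lip : LipschitzOnWith 1 tail (Icc (s + D) T') := by
    intro u hu v hv
    have hmem : ∀ w ∈ Icc (s + D) T', w - (s + D) + s₁ ∈ Icc 0 c.T := by
      intro w hw
      obtain ⟨hw1, hw2⟩ := hw
      rw [hT'def] at hw2
      exact ⟨by linarith [hs₁.1], by linarith⟩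
    have := c.lip (hmem u hu) (hmem v hv)
    have he : edist (u - (s + D) + s₁) (v - (s + D) + s₁) = edist u v := by
      rw [edist_dist, edist_dist, Real.dist_eq, Real.dist_eq]
      congr 1
      ring_nf
    simpa [htaildef, he] using this
  have hηlip : LipschitzOnWith 1 η.toFun (Icc 0 s) :=
    η.lip.mono (Icc_subset_Icc le_rfl hs.2)
  have hmid_s : mid s = c.toFun s₂ := by simp [hmiddef]
  have hmid_end : mid (s + D) = c.toFun s₁ := by
    rw [hmiddef]
    simp only
    congr 1
    rw [show s + D - s = D by ring, hσD]
    ring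
  have htail_start : tail (s + D) = c.toFun s₁ := by
    rw [htaildef]
    simp only
    congr 1
    ring
  set inner : ℝ → X := fun t => if t ≤ s + D then mid t else tail t with hinnerdef
  have hinner_lip : LipschitzOnWith 1 inner (Icc s T') :=
    lip_glue hsle hsT' hmid_lip htail_lip (hmid_end.trans htail_start.symm)
  have hinner_s : inner s = c.toFun s₂ := by
    rw [hinnerdef]; simp only [if_pos hsle]; exact hmid_s
  set γfun : ℝ → X := fun t => if t ≤ s then η.toFun t else inner t with hγfundef
  have hγlip : LipschitzOnWith 1 γfun (Icc 0 T') :=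
    lip_glue hs.1 (hsle.trans hsT') hηlip hinner_lip (hηs.trans hinner_s.symm)
  have hT'0 : 0 ≤ T' := hs.1.trans (hsle.trans hsT')
  have hsource : γfun 0 = x := by
    rw [hγfundef]; simp only [if_pos hs.1]; exact η.source
  have htarget : γfun T' = y := by
    by_cases h1 : T' ≤ s
    · have hT's : T' = s := le_antisymm h1 (hsle.trans hsT')
      have hDz : D = 0 := by rw [hT'def] at hT's; linarith [hs₁.2]
      have hs12 : s₁ = s₂ := by
        have := abs_eq_zero.mp (hDdef ▸ hDz)
        linarith [sub_eq_zero.mp this]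
      have hs1T : s₁ = c.T := by rw [hT'def] at hT's; linarith
      rw [hγfundef]; simp only [if_pos h1]
      rw [hT's, hηs, ← hs12, hs1T, c.target]
    · rw [hγfundef]; simp only [if_neg h1]
      rw [hinnerdef]
      by_cases h2 : T' ≤ s + D
      · have hT'eq : T' = s + D := le_antisymm h2 hsT'
        have hTs1 : c.T = s₁ := by rw [hT'def] at hT'eq; linarith
        simp only [if_pos h2]
        rw [hT'eq, hmid_end, ← hTs1]
        exact c.target
      · simp only [if_neg h2]
        rw [htaildef]
        simp only
        rw [show T' - (s + D) + s₁ = c.T by rw [hT'def]; ring, c.target]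
  set γ : RectCurve X x y := ⟨T', hT'0, γfun, hγlip, hsource, htarget⟩ with hγdef
  have hγmem : s + D ∈ Icc 0 γ.T := ⟨by linarith [hs.1], hsT'⟩
  have hγpt : γ.toFun (s + D) = c.toFun s₁ := by
    show γfun (s + D) = c.toFun s₁
    by_cases h : s + D ≤ s
    · have hDz : D = 0 := le_antisymm (by linarith) hD0
      have hs12 : s₁ = s₂ := by
        have := abs_eq_zero.mp (hDdef ▸ hDz)
        linarith [sub_eq_zero.mp this]
      rw [hγfundef]; simp only [if_pos h]
      rw [hDz, add_zero, hηs, hs12]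
    · rw [hγfundef]; simp only [if_neg h]
      rw [hinnerdef]; simp only [if_pos (le_refl (s + D))]
      exact hmid_end
  have hlen : γ.lengthInUpTo A (s + D) ≤ η.lengthInUpTo A s
      + volume {t : ℝ | t ∈ Icc (min s₁ s₂) (max s₁ s₂) ∧ c.toFun t ∈ A} := by
    have hmin2 : min s η.T = s := min_eq_left hs.2
    have hsub : {t : ℝ | t ∈ Icc 0 (min (s + D) γ.T) ∧ γ.toFun t ∈ A} ⊆
        {t : ℝ | t ∈ Icc 0 (min s η.T) ∧ η.toFun t ∈ A}
        ∪ (fun t => (s₂ - σ * s) + σ * t) ⁻¹'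
            {u : ℝ | u ∈ Icc (min s₁ s₂) (max s₁ s₂) ∧ c.toFun u ∈ A} := by
      rintro t ⟨⟨ht0, ht1⟩, htA⟩
      have ht1' : t ≤ s + D := ht1.trans (min_le_left _ _)
      by_cases h : t ≤ s
      · left
        refine ⟨⟨ht0, by rw [hmin2]; exact h⟩, ?_⟩
        have he : γ.toFun t = η.toFun t := by
          show γfun t = _
          rw [hγfundef]; simp only [if_pos h]
        rwa [he] at htA
      · right
        have htmem : t ∈ Icc s (s + D) := ⟨le_of_not_ge h, ht1'⟩
        have he : γ.toFun t = c.toFun (s₂ + σ * (t - s)) := by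
          show γfun t = _
          rw [hγfundef]; simp only [if_neg h]
          rw [hinnerdef]; simp only [if_pos ht1', hmiddef]
        have harg : (s₂ - σ * s) + σ * t = s₂ + σ * (t - s) := by ring
        simp only [mem_preimage, mem_setOf_eq, harg]
        exact ⟨hu_mem t htmem, by rwa [he] at htA⟩
    calc γ.lengthInUpTo A (s + D)
        ≤ volume {t : ℝ | t ∈ Icc 0 (min s η.T) ∧ η.toFun t ∈ A}
          + volume ((fun t => (s₂ - σ * s) + σ * t) ⁻¹'
              {u : ℝ | u ∈ Icc (min s₁ s₂) (max s₁ s₂) ∧ c.toFun u ∈ A}) :=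
          (measure_mono hsub).trans (measure_union_le _ _)
      _ = η.lengthInUpTo A s
          + volume {t : ℝ | t ∈ Icc (min s₁ s₂) (max s₁ s₂) ∧ c.toFun t ∈ A} := by
          rw [volume_preimage_affine_unit hσ]
          rfl
  refine le_trans ?_ hlen
  simp only [posFn]
  exact iInf_le_of_le γ (iInf_le_of_le (s + D) (iInf_le_of_le hγmem (iInf_le_of_le hγpt le_rfl)))

end ConcatLemma

private lemma ennreal_iInf_add' {ι : Sort*} (f : ι → ℝ≥0∞) (a : ℝ≥0∞) :
    (⨅ i, f i) + a = ⨅ i, (f i + a) := by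
  rcases isEmpty_or_nonempty ι with h | h
  · simp [iInf_of_empty]
  · exact ENNReal.iInf_add

theorem stmt7 {X : Type*} [MetricSpace X] (x y : X) (A : Set X) (hA : IsClosed A)
    (hsep : IsPathSep x y A) (c : RectCurve X x y)
    (pt : ℝ → X)
    (hpt : ∀ τ : ℝ, pt τ =
      c.toFun (sInf {s : ℝ | s ∈ Set.Icc 0 c.T ∧ ENNReal.ofReal τ ≤ c.lengthInUpTo A s}))
    (τ₁ τ₂ : ℝ)
    (hτ₁ : τ₁ ∈ Set.Icc 0 (c.lengthIn A).toReal)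
    (hτ₂ : τ₂ ∈ Set.Icc 0 (c.lengthIn A).toReal) :
    posFn x y A (pt τ₁) ≤ posFn x y A (pt τ₂) + ENNReal.ofReal |τ₁ - τ₂| := by
  obtain ⟨hτ₁0, hτ₁le⟩ := hτ₁
  obtain ⟨hτ₂0, hτ₂le⟩ := hτ₂
  have hfin : c.lengthIn A ≠ ⊤ := lengthInUpTo_ne_top c A c.T
  have hofle : ∀ τ : ℝ, τ ≤ (c.lengthIn A).toReal → ENNReal.ofReal τ ≤ c.lengthIn A := by
    intro τ h
    rw [← ENNReal.ofReal_toReal hfin]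
    exact ENNReal.ofReal_le_ofReal h
  set sb₁ := sInf {s : ℝ | s ∈ Set.Icc 0 c.T ∧ ENNReal.ofReal τ₁ ≤ c.lengthInUpTo A s} with hsb₁def
  set sb₂ := sInf {s : ℝ | s ∈ Set.Icc 0 c.T ∧ ENNReal.ofReal τ₂ ≤ c.lengthInUpTo A s} with hsb₂def
  have hsb₁ : sb₁ ∈ Set.Icc 0 c.T := sInf_mem_Icc c A (hofle _ hτ₁le)
  have hsb₂ : sb₂ ∈ Set.Icc 0 c.T := sInf_mem_Icc c A (hofle _ hτ₂le)
  have hF₁ : c.lengthInUpTo A sb₁ = ENNReal.ofReal τ₁ :=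
    lengthInUpTo_sInf c A hτ₁0 (hofle _ hτ₁le)
  have hF₂ : c.lengthInUpTo A sb₂ = ENNReal.ofReal τ₂ :=
    lengthInUpTo_sInf c A hτ₂0 (hofle _ hτ₂le)
  have hpt₁ : pt τ₁ = c.toFun sb₁ := hpt τ₁
  have hpt₂ : pt τ₂ = c.toFun sb₂ := hpt τ₂
  -- the volume of the middle segment is at most |τ₁ - τ₂|
  have hmidvol : volume {t : ℝ | t ∈ Set.Icc (min sb₁ sb₂) (max sb₁ sb₂) ∧ c.toFun t ∈ A}
      ≤ ENNReal.ofReal |τ₁ - τ₂| := by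
    set a := min sb₁ sb₂ with hadef
    set b := max sb₁ sb₂ with hbdef
    have hab : a ≤ b := min_le_max
    have ha : a ∈ Set.Icc 0 c.T := ⟨le_min hsb₁.1 hsb₂.1, (min_le_left _ _).trans hsb₁.2⟩
    have hb : b ∈ Set.Icc 0 c.T := ⟨hsb₁.1.trans (le_max_left _ _), max_le hsb₁.2 hsb₂.2⟩
    have hIccIoc : volume {t : ℝ | t ∈ Set.Icc a b ∧ c.toFun t ∈ A}
        ≤ volume {t : ℝ | t ∈ Set.Ioc a b ∧ c.toFun t ∈ A} := by
      have hsub : {t : ℝ | t ∈ Set.Icc a b ∧ c.toFun t ∈ A}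
          ⊆ {t : ℝ | t ∈ Set.Ioc a b ∧ c.toFun t ∈ A} ∪ {a} := by
        rintro t ⟨⟨ht1, ht2⟩, htA⟩
        rcases eq_or_lt_of_le ht1 with h | h
        · exact Or.inr (by simp [h.symm])
        · exact Or.inl ⟨⟨h, ht2⟩, htA⟩
      calc volume {t : ℝ | t ∈ Set.Icc a b ∧ c.toFun t ∈ A}
          ≤ volume {t : ℝ | t ∈ Set.Ioc a b ∧ c.toFun t ∈ A} + volume {a} :=
            (measure_mono hsub).trans (measure_union_le _ _)
        _ = volume {t : ℝ | t ∈ Set.Ioc a b ∧ c.toFun t ∈ A} := by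
            rw [Real.volume_singleton, add_zero]
    refine hIccIoc.trans ?_
    have hsplit := lengthInUpTo_split c hA ha.1 hab hb.2
    -- identify endpoints
    have hcases : (c.lengthInUpTo A a = ENNReal.ofReal (min τ₁ τ₂)
        ∧ c.lengthInUpTo A b = ENNReal.ofReal (max τ₁ τ₂)) := by
      rcases le_total τ₁ τ₂ with h | h
      · have hsble : sb₁ ≤ sb₂ := by
          refine csInf_le_csInf ⟨0, fun s hs => hs.1.1⟩
            ⟨c.T, ⟨⟨c.T_nonneg, le_rfl⟩, hofle _ hτ₂le⟩⟩ fun s hs =>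
            ⟨hs.1, le_trans (ENNReal.ofReal_le_ofReal h) hs.2⟩
        rw [hadef, hbdef, min_eq_left hsble, max_eq_right hsble]
        exact ⟨hF₁.trans (by rw [min_eq_left h]), hF₂.trans (by rw [max_eq_right h])⟩
      · have hsble : sb₂ ≤ sb₁ := by
          refine csInf_le_csInf ⟨0, fun s hs => hs.1.1⟩
            ⟨c.T, ⟨⟨c.T_nonneg, le_rfl⟩, hofle _ hτ₁le⟩⟩ fun s hs =>
            ⟨hs.1, le_trans (ENNReal.ofReal_le_ofReal h) hs.2⟩
        rw [hadef, hbdef, min_eq_right hsble, max_eq_left hsble]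
        exact ⟨hF₂.trans (by rw [min_eq_right h]), hF₁.trans (by rw [max_eq_left h])⟩
    obtain ⟨hFa, hFb⟩ := hcases
    rw [hFa, hFb] at hsplit
    have hmaxmin : max τ₁ τ₂ = min τ₁ τ₂ + |τ₁ - τ₂| := by
      rcases le_total τ₁ τ₂ with h | h
      · rw [min_eq_left h, max_eq_right h, abs_sub_comm, abs_of_nonneg (by linarith)]; ring
      · rw [min_eq_right h, max_eq_left h, abs_of_nonneg (by linarith)]; ring
    have hminnn : 0 ≤ min τ₁ τ₂ := le_min hτ₁0 hτ₂0
    rw [hmaxmin, ENNReal.ofReal_add hminnn (abs_nonneg _)] at hsplit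
    exact le_of_eq ((ENNReal.add_right_inj ENNReal.ofReal_ne_top).mp hsplit.symm)
  have key : ∀ (η : RectCurve X x y) (s' : ℝ), s' ∈ Set.Icc 0 η.T → η.toFun s' = pt τ₂ →
      posFn x y A (pt τ₁) ≤ η.lengthInUpTo A s' + ENNReal.ofReal |τ₁ - τ₂| := by
    intro η s' hs' heq
    rw [hpt₁]
    refine (posFn_le_concat A c hsb₁ hsb₂ η hs' (heq.trans hpt₂)).trans ?_
    exact add_le_add_right hmidvol _
  calc posFn x y A (pt τ₁)
      ≤ ⨅ (η : RectCurve X x y) (s' : ℝ) (_ : s' ∈ Set.Icc 0 η.T) (_ : η.toFun s' = pt τ₂),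
        (η.lengthInUpTo A s' + ENNReal.ofReal |τ₁ - τ₂|) :=
        le_iInf fun η => le_iInf fun s' => le_iInf fun h => le_iInf fun h' => key η s' h h'
    _ = posFn x y A (pt τ₂) + ENNReal.ofReal |τ₁ - τ₂| := by
        rw [posFn]
        simp only [ennreal_iInf_add']
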